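/- Let τ > 0 and χ ∈ ℝ, and consider the quadratic equation (1 − 1/z)(1 − e^{−τ} z) = e^{−τ/2−χ}, i.e. e^{−τ} z² − (1 + e^{−τ} − e^{−τ/2−χ}) z + 1 = 0. This equation has a pair of non-real complex-conjugate roots if and only if |e^{τ/2} + e^{−τ/2} − e^{−χ}| < 2; and in that case each root z satisfies |z| = e^{τ/2} and |z − e^{τ}| = e^{3τ/4 − χ/2}, so the two roots are exactly the two intersection points of the circles {|z| = e^{τ/2}} and {|z − e^{τ}| = e^{3τ/4 − χ/2}}. -/

import Mathlib

/-- The critical-point quadratic `e^{-τ} z² - (1 + e^{-τ} - e^{-τ/2-χ}) z + 1`, i.e.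
`(1 - 1/z)(1 - e^{-τ} z) - e^{-τ/2-χ}` multiplied by `z`. -/
noncomputable def critPoly (τ χ : ℝ) (z : ℂ) : ℂ :=
  (Real.exp (-τ) : ℂ) * z ^ 2 -
    ((1 : ℂ) + (Real.exp (-τ) : ℂ) - (Real.exp (-τ / 2 - χ) : ℂ)) * z + 1

lemma aux_abs (w : ℂ) (t : ℝ) (ht : 0 < t) :
    ‖w‖ = t ↔ w.re^2 + w.im^2 = t^2 := by
  constructor
  · intro h
    rw [← h, Complex.sq_norm, Complex.normSq_apply]; ring
  · intro h
    have h2 : ‖w‖ ^ 2 = t ^ 2 := by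
      rw [Complex.sq_norm, Complex.normSq_apply]; linear_combination h
    have := (sq_eq_sq_iff_abs_eq_abs _ _).mp h2
    rwa [abs_of_nonneg (norm_nonneg w), abs_of_pos ht] at this

lemma aux_quad (c t : ℝ) (z : ℂ) :
    z^2 - (c:ℂ)*z + (t:ℂ) = 0 ↔
      (z.re^2 - z.im^2 - c*z.re + t = 0 ∧ z.im*(2*z.re - c) = 0) := by
  rw [Complex.ext_iff]
  simp only [Complex.add_re, Complex.add_im, Complex.sub_re, Complex.sub_im, Complex.mul_re,
    Complex.mul_im, Complex.one_re, Complex.one_im, Complex.ofReal_re, Complex.ofReal_im,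
    pow_two, Complex.zero_re, Complex.zero_im]
  constructor <;> rintro ⟨h1, h2⟩ <;>
    exact ⟨by linear_combination h1, by linear_combination h2⟩

lemma aux_poly (τ χ : ℝ)
    (haC : (Real.exp (-τ) : ℂ) * (Real.exp (τ / 2) : ℂ)^2 = 1)
    (hbC : (Real.exp (-τ / 2 - χ) : ℂ) * (Real.exp (τ / 2) : ℂ) = (Real.exp (-χ) : ℂ))
    (z : ℂ) :
    critPoly τ χ z = 0 ↔
      z^2 - ((Real.exp (τ / 2)^2 + 1 - Real.exp (τ / 2) * Real.exp (-χ) : ℝ) : ℂ)*z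
        + ((Real.exp (τ / 2)^2 : ℝ) : ℂ) = 0 := by
  simp only [critPoly, Complex.ofReal_add, Complex.ofReal_sub, Complex.ofReal_mul,
    Complex.ofReal_pow, Complex.ofReal_one]
  constructor
  · intro h
    linear_combination (Real.exp (τ / 2) : ℂ)^2 * h + (z - z^2) * haC
      - (Real.exp (τ / 2) : ℂ) * z * hbC
  · intro h
    linear_combination (Real.exp (-τ) : ℂ) * h
      + (z - (Real.exp (-τ / 2 - χ) : ℂ) * z - 1) * haC
      + (Real.exp (-τ) : ℂ) * (Real.exp (τ / 2) : ℂ) * z * hbC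

lemma aux_fwd (p q m r s : ℝ) (hp : 0 < p) (hm : m * p = 1)
    (hA : |p + m - q| < 2)
    (h1 : r^2 - s^2 - (p^2 + 1 - p*q)*r + p^2 = 0)
    (h2 : s*(2*r - (p^2 + 1 - p*q)) = 0) :
    r^2 + s^2 = p^2 ∧ (r - p^2)^2 + s^2 = p^3*q := by
  rcases mul_eq_zero.mp h2 with hs | hc
  · exfalso
    subst hs
    have hA2 := abs_lt.mp hA
    have e1 : (2*r - (p^2+1-p*q))^2 = (p^2+1-p*q)^2 - 4*p^2 := by linear_combination 4*h1
    have e2 : (p^2+1-p*q)^2 = p^2*(p+m-q)^2 := by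
      linear_combination (-(p^2+1-p*q) - p*(p+m-q))*hm
    have h4A : 0 < 4 - (p+m-q)^2 := by nlinarith [hA2.1, hA2.2]
    nlinarith [sq_nonneg (2*r - (p^2+1-p*q)), e1, e2, mul_pos (pow_pos hp 2) h4A]
  · have hsum : r^2 + s^2 = p^2 := by linear_combination r*hc - h1
    exact ⟨hsum, by linear_combination hsum - p^2*hc⟩

lemma aux_bwd (p q m r s : ℝ) (hm : m * p = 1)
    (hsum : r^2 + s^2 = p^2) (hcirc : (r - p^2)^2 + s^2 = p^3*q) :
    r^2 - s^2 - (p^2 + 1 - p*q)*r + p^2 = 0 ∧ s*(2*r - (p^2 + 1 - p*q)) = 0 := by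
  have hd : 2*p^2*r = p^2 + p^4 - p^3*q := by linear_combination hsum - hcirc
  have hc : 2*r - (p^2 + 1 - p*q) = 0 := by
    linear_combination m^2*hd - (m*p+1)*(2*r - p^2 - 1 + p*q)*hm
  exact ⟨by linear_combination r*hc - hsum, by linear_combination s*hc⟩

lemma aux_exist (p q m : ℝ) (hp : 0 < p) (hm : m * p = 1) (hA : |p + m - q| < 2) :
    ∃ r s : ℝ, s ≠ 0 ∧ r^2 + s^2 = p^2 ∧ (r - p^2)^2 + s^2 = p^3*q := by
  have hA2 := abs_lt.mp hA
  have h4 : 0 ≤ 4 - (p+m-q)^2 := by nlinarith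
  have h4' : 0 < 4 - (p+m-q)^2 := by nlinarith
  have hsq := Real.sq_sqrt h4
  have hs : 0 < Real.sqrt (4-(p+m-q)^2) := Real.sqrt_pos.mpr h4'
  refine ⟨p*(p+m-q)/2, p*Real.sqrt (4-(p+m-q)^2)/2, ?_, ?_, ?_⟩
  · exact ne_of_gt (div_pos (mul_pos hp hs) two_pos)
  · linear_combination (p^2/4)*hsq
  · have hc : 2*(p*(p+m-q)/2) - (p^2 + 1 - p*q) = 0 := by linear_combination hm
    have hsum : (p*(p+m-q)/2)^2 + (p*Real.sqrt (4-(p+m-q)^2)/2)^2 = p^2 := by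
      linear_combination (p^2/4)*hsq
    linear_combination hsum - p^2*hc

lemma aux_nec (p q m r s : ℝ) (hp : 0 < p) (hm : m * p = 1) (hs : s ≠ 0)
    (h1 : r^2 - s^2 - (p^2 + 1 - p*q)*r + p^2 = 0)
    (h2 : s*(2*r - (p^2 + 1 - p*q)) = 0) : |p + m - q| < 2 := by
  have hc : 2*r - (p^2 + 1 - p*q) = 0 := by
    rcases mul_eq_zero.mp h2 with h | h
    · exact absurd h hs
    · exact h
  have hsum : r^2 + s^2 = p^2 := by linear_combination r*hc - h1
  have h4 : p^2*(4 - (p+m-q)^2) = 4*s^2 := by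
    linear_combination -4*hsum + (2*r + p*(p+m-q))*hc - (2*r + p*(p+m-q))*hm
  have hs2 : 0 < s^2 := by rcases hs.lt_or_gt with h | h <;> nlinarith
  have h5 : (p+m-q)^2 < 4 := by nlinarith [pow_pos hp 2]
  rw [abs_lt]; constructor <;> nlinarith

/-- The critical-point equation `(1-1/z)(1-e^{-τ}z) = e^{-τ/2-χ}` has a pair of
non-real complex-conjugate roots iff `|e^{τ/2} + e^{-τ/2} - e^{-χ}| < 2`; in that case
its roots are exactly the two intersection points of the circles `|z| = e^{τ/2}` and
`|z - e^{τ}| = e^{3τ/4 - χ/2}`. -/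
theorem critical_points_of_action (τ χ : ℝ) (hτ : 0 < τ) :
    ((∃ z : ℂ, z.im ≠ 0 ∧ critPoly τ χ z = 0 ∧ critPoly τ χ ((starRingEnd ℂ) z) = 0) ↔
      |Real.exp (τ / 2) + Real.exp (-τ / 2) - Real.exp (-χ)| < 2) ∧
    (|Real.exp (τ / 2) + Real.exp (-τ / 2) - Real.exp (-χ)| < 2 →
      ∀ z : ℂ, critPoly τ χ z = 0 ↔
        (‖z‖ = Real.exp (τ / 2) ∧
          ‖z - (Real.exp τ : ℂ)‖ = Real.exp (3 * τ / 4 - χ / 2))) := by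
  have hp : 0 < Real.exp (τ / 2) := Real.exp_pos _
  have hm : Real.exp (-τ / 2) * Real.exp (τ / 2) = 1 := by
    rw [← Real.exp_add, show -τ/2 + τ/2 = 0 by ring, Real.exp_zero]
  have haR : Real.exp (-τ) * Real.exp (τ / 2)^2 = 1 := by
    rw [sq, ← Real.exp_add, ← Real.exp_add, show -τ + (τ/2 + τ/2) = 0 by ring, Real.exp_zero]
  have hbR : Real.exp (-τ / 2 - χ) * Real.exp (τ / 2) = Real.exp (-χ) := by
    rw [← Real.exp_add]; congr 1; ring
  have hT : Real.exp τ = Real.exp (τ / 2)^2 := by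
    rw [sq, ← Real.exp_add]; congr 1; ring
  have hrad : Real.exp (3 * τ / 4 - χ / 2)^2 = Real.exp (τ / 2)^3 * Real.exp (-χ) := by
    rw [sq, ← Real.exp_add,
      show Real.exp (τ/2)^3 = Real.exp (τ/2) * (Real.exp (τ/2) * Real.exp (τ/2)) by ring,
      ← Real.exp_add, ← Real.exp_add, ← Real.exp_add]
    congr 1; ring
  have haC : (Real.exp (-τ) : ℂ) * (Real.exp (τ / 2) : ℂ)^2 = 1 := by exact_mod_cast haR
  have hbC : (Real.exp (-τ / 2 - χ) : ℂ) * (Real.exp (τ / 2) : ℂ) = (Real.exp (-χ) : ℂ) := by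
    exact_mod_cast hbR
  have hchar : ∀ z : ℂ, critPoly τ χ z = 0 ↔
      (z.re^2 - z.im^2 - (Real.exp (τ / 2)^2 + 1 - Real.exp (τ / 2) * Real.exp (-χ))*z.re
          + Real.exp (τ / 2)^2 = 0 ∧
        z.im*(2*z.re - (Real.exp (τ / 2)^2 + 1 - Real.exp (τ / 2) * Real.exp (-χ))) = 0) :=
    fun z => (aux_poly τ χ haC hbC z).trans (aux_quad _ _ z)
  have hcirc : ∀ z : ℂ,
      (‖z‖ = Real.exp (τ / 2) ∧
        ‖z - (Real.exp τ : ℂ)‖ = Real.exp (3 * τ / 4 - χ / 2)) ↔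
      (z.re^2 + z.im^2 = Real.exp (τ / 2)^2 ∧
        (z.re - Real.exp (τ / 2)^2)^2 + z.im^2 = Real.exp (τ / 2)^3 * Real.exp (-χ)) := by
    intro z
    rw [aux_abs z _ hp, aux_abs _ _ (Real.exp_pos _), hrad]
    simp only [Complex.sub_re, Complex.sub_im, Complex.ofReal_re, Complex.ofReal_im, hT,
      sub_zero]
  constructor
  · constructor
    · rintro ⟨z, him, hz, -⟩
      have h := (hchar z).mp hz
      exact aux_nec (Real.exp (τ / 2)) (Real.exp (-χ)) (Real.exp (-τ / 2)) z.re z.im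
        hp hm him h.1 h.2
    · intro hA
      obtain ⟨r, s, hs, hsum, hc2⟩ :=
        aux_exist (Real.exp (τ / 2)) (Real.exp (-χ)) (Real.exp (-τ / 2)) hp hm hA
      refine ⟨⟨r, s⟩, hs, ?_, ?_⟩
      · exact (hchar _).mpr
          (aux_bwd (Real.exp (τ / 2)) (Real.exp (-χ)) (Real.exp (-τ / 2)) r s hm hsum hc2)
      · have hb := aux_bwd (Real.exp (τ / 2)) (Real.exp (-χ)) (Real.exp (-τ / 2)) r (-s) hm
          (by linear_combination hsum) (by linear_combination hc2)
        apply (hchar _).mpr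
        refine ⟨?_, ?_⟩ <;> simp only [Complex.conj_re, Complex.conj_im]
        · exact hb.1
        · exact hb.2
  · intro hA z
    rw [hchar z, hcirc z]
    constructor
    · rintro ⟨h1, h2⟩
      exact aux_fwd (Real.exp (τ / 2)) (Real.exp (-χ)) (Real.exp (-τ / 2)) z.re z.im
        hp hm hA h1 h2
    · rintro ⟨h1, h2⟩
      exact aux_bwd (Real.exp (τ / 2)) (Real.exp (-χ)) (Real.exp (-τ / 2)) z.re z.im hm h1 h2
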